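/- Let C = [1,x₁] × ⋯ × [1,x_d] ⊆ ℤ^d, n = |C| = x₁⋯x_d, and C' = [1,n] ⊆ ℤ. Then the maximum over α of the number of canonical tilings of C by tiles of size α is at most the maximum over α' of the number of canonical tilings of C' by tiles of size α': max_α |T(α, C)| ≤ max_{α'} |T(α', C')|. -/
import Mathlib

open Finset Pointwise

/-- Canonical 1-dimensional tilings of `[1,n]` with tile size `α`. -/
def CanT1 (α n : ℕ) : Set (Finset ℤ × Finset ℤ) :=
  {p | p.1 + p.2 = Finset.Icc 1 (n : ℤ) ∧ p.1.card = α ∧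
    (Finset.Icc 1 (n : ℤ)).card = p.1.card * p.2.card ∧
    (0 : ℤ) ∈ p.2 ∧ ∀ b ∈ p.2, 0 ≤ b}

/-- Canonical `d`-dimensional tilings of `C = [1,x₁] × ⋯ × [1,x_d]` with tile size `α`. -/
def CanTd (d : ℕ) (x : Fin d → ℕ) (α : ℕ) :
    Set (Finset (Fin d → ℤ) × Finset (Fin d → ℤ)) :=
  {p | p.1 + p.2 = Fintype.piFinset (fun i => Finset.Icc 1 (x i : ℤ)) ∧
    p.1.card = α ∧
    (Fintype.piFinset (fun i => Finset.Icc 1 (x i : ℤ))).card = p.1.card * p.2.card ∧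
    (0 : Fin d → ℤ) ∈ p.2 ∧ ∀ b ∈ p.2, ∀ i, 0 ≤ b i}

section Aux

variable {d : ℕ} (x : Fin d → ℕ)

/-- Mixed-radix linear form. -/
def psi0 (v : Fin d → ℤ) : ℤ :=
  ∑ i, v i * ∏ j : Fin i.val, (x (Fin.castLE i.is_lt.le j) : ℤ)

lemma psi0_add (u v : Fin d → ℤ) : psi0 x (u + v) = psi0 x u + psi0 x v := by
  simp [psi0, add_mul, Finset.sum_add_distrib]

lemma psi0_zero : psi0 x 0 = 0 := by simp [psi0]

lemma psi0_eq_equiv (v : Fin d → ℤ) (h : ∀ i, 0 ≤ v i ∧ v i < x i) :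
    psi0 x v =
      ((finPiFinEquiv (fun i => (⟨(v i).toNat, by have := h i; omega⟩ : Fin (x i)))
        : Fin (∏ i, x i)) : ℕ) := by
  rw [finPiFinEquiv_apply]
  push_cast
  refine Finset.sum_congr rfl fun i _ => ?_
  rw [Int.toNat_of_nonneg (h i).1]

lemma psi0_nonneg (v : Fin d → ℤ) (h : ∀ i, 0 ≤ v i ∧ v i < x i) : 0 ≤ psi0 x v := by
  rw [psi0_eq_equiv x v h]
  exact Int.natCast_nonneg _

lemma psi0_lt (v : Fin d → ℤ) (h : ∀ i, 0 ≤ v i ∧ v i < x i) :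
    psi0 x v < (∏ i, x i : ℕ) := by
  rw [psi0_eq_equiv x v h]
  exact_mod_cast (finPiFinEquiv (fun i => (⟨(v i).toNat, by have := h i; omega⟩ : Fin (x i)))).isLt

lemma psi0_inj (v w : Fin d → ℤ) (hv : ∀ i, 0 ≤ v i ∧ v i < x i)
    (hw : ∀ i, 0 ≤ w i ∧ w i < x i) (h : psi0 x v = psi0 x w) : v = w := by
  rw [psi0_eq_equiv x v hv, psi0_eq_equiv x w hw] at h
  have h2 : (finPiFinEquiv (fun i => (⟨(v i).toNat, by have := hv i; omega⟩ : Fin (x i))))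
      = (finPiFinEquiv (fun i => (⟨(w i).toNat, by have := hw i; omega⟩ : Fin (x i)))) :=
    Fin.ext (by exact_mod_cast h)
  have h3 := finPiFinEquiv.injective h2
  funext i
  have h4 : (v i).toNat = (w i).toNat := congrArg Fin.val (congrFun h3 i)
  have := (hv i).1; have := (hw i).1
  omega

lemma psi0_surj (k : ℤ) (h0 : 0 ≤ k) (h1 : k < (∏ i, x i : ℕ)) :
    ∃ v : Fin d → ℤ, (∀ i, 0 ≤ v i ∧ v i < x i) ∧ psi0 x v = k := by
  set f := finPiFinEquiv.symm (⟨k.toNat, by omega⟩ : Fin (∏ i, x i)) with hf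
  have hb : ∀ i : Fin d, 0 ≤ ((f i : ℕ) : ℤ) ∧ ((f i : ℕ) : ℤ) < x i :=
    fun i => ⟨Int.natCast_nonneg _, by exact_mod_cast (f i).isLt⟩
  refine ⟨fun i => ((f i : ℕ) : ℤ), hb, ?_⟩
  rw [psi0_eq_equiv x _ hb]
  have he : (fun i => (⟨(((f i : ℕ) : ℤ)).toNat, by have := hb i; omega⟩ : Fin (x i))) = f := by
    funext i; exact Fin.ext (by simp)
  rw [he, hf, Equiv.apply_symm_apply]
  show ((k.toNat : ℕ) : ℤ) = k
  omega

/-- The shifted mixed-radix map sending the box `∏ [1, xᵢ]` to `[1, ∏ xᵢ]`. -/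
def psi (v : Fin d → ℤ) : ℤ := 1 + psi0 x (v - 1)

lemma psi_add (a b : Fin d → ℤ) : psi x (a + b) = psi x a + psi0 x b := by
  have : a + b - 1 = (a - 1) + b := by ring
  rw [psi, this, psi0_add, psi]; ring

lemma mem_box_iff (v : Fin d → ℤ) :
    v ∈ Fintype.piFinset (fun i => Finset.Icc 1 (x i : ℤ)) ↔ ∀ i, 1 ≤ v i ∧ v i ≤ x i := by
  simp [Fintype.mem_piFinset, Finset.mem_Icc]

lemma shift_box (v : Fin d → ℤ) (h : ∀ i, 1 ≤ v i ∧ v i ≤ x i) :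
    ∀ i, 0 ≤ (v - 1) i ∧ (v - 1) i < x i := by
  intro i; have := h i; simp only [Pi.sub_apply, Pi.one_apply]; omega

lemma psi_injOn (v w : Fin d → ℤ) (hv : ∀ i, 1 ≤ v i ∧ v i ≤ x i)
    (hw : ∀ i, 1 ≤ w i ∧ w i ≤ x i) (h : psi x v = psi x w) : v = w := by
  have h' : psi0 x (v - 1) = psi0 x (w - 1) := by
    have := h; unfold psi at this; omega
  have := psi0_inj x _ _ (shift_box x v hv) (shift_box x w hw) h'
  have : v - 1 + 1 = w - 1 + 1 := by rw [this]
  simpa using this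

lemma psi_image_box :
    (Fintype.piFinset (fun i => Finset.Icc 1 (x i : ℤ))).image (psi x)
      = Finset.Icc 1 ((∏ i, x i : ℕ) : ℤ) := by
  ext k
  simp only [Finset.mem_image, Finset.mem_Icc]
  constructor
  · rintro ⟨v, hv, rfl⟩
    rw [mem_box_iff] at hv
    have h1 := psi0_nonneg x _ (shift_box x v hv)
    have h2 := psi0_lt x _ (shift_box x v hv)
    unfold psi; omega
  · rintro ⟨h1, h2⟩
    obtain ⟨v, hv, hpsi⟩ := psi0_surj x (k - 1) (by omega) (by omega)
    refine ⟨v + 1, ?_, ?_⟩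
    · rw [mem_box_iff]; intro i
      have := hv i; simp only [Pi.add_apply, Pi.one_apply]; omega
    · unfold psi; simp only [add_sub_cancel_right]; omega

end Aux

lemma canTd_map_mem (d : ℕ) (x : Fin d → ℕ) (hx : ∀ i, 0 < x i) (α : ℕ)
    (p : Finset (Fin d → ℤ) × Finset (Fin d → ℤ)) (hp : p ∈ CanTd d x α) :
    (p.1.image (psi x), p.2.image (psi0 x)) ∈ CanT1 α (∏ i, x i) := by
  obtain ⟨hAB, hcard, hmul, h0B, hBpos⟩ := hp
  set A := p.1; set B := p.2
  set C := Fintype.piFinset (fun i => Finset.Icc 1 (x i : ℤ)) with hC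
  have hn0 : 0 < ∏ i, x i := Finset.prod_pos (fun i _ => hx i)
  -- A ⊆ C
  have hA_sub : A ⊆ C := by
    intro a ha
    have : a + 0 ∈ A + B := Finset.add_mem_add ha h0B
    rw [hAB] at this; simpa using this
  -- A nonempty
  have hA_ne : A.Nonempty := by
    have h1 : (1 : Fin d → ℤ) ∈ C := by
      rw [mem_box_iff]; intro i; have := hx i
      constructor <;> simp <;> omega
    rw [← hAB] at h1
    obtain ⟨a, ha, -⟩ := Finset.mem_add.mp h1
    exact ⟨a, ha⟩
  -- B ⊆ shifted box
  have hB_sub : ∀ b ∈ B, ∀ i, 0 ≤ b i ∧ b i < x i := by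
    intro b hb i
    obtain ⟨a, ha⟩ := hA_ne
    have hab : a + b ∈ C := by rw [← hAB]; exact Finset.add_mem_add ha hb
    rw [mem_box_iff] at hab
    have h1 := (mem_box_iff x a).mp (hA_sub ha) i
    have h2 := hab i
    have h3 := hBpos b hb i
    simp only [Pi.add_apply] at h2
    omega
  refine ⟨?_, ?_, ?_, ?_, ?_⟩
  · -- sumset
    have himg : A.image (psi x) + B.image (psi0 x) = (A + B).image (psi x) := by
      ext c
      simp only [Finset.mem_add, Finset.mem_image]
      constructor
      · rintro ⟨u, ⟨a, ha, rfl⟩, v, ⟨b, hb, rfl⟩, rfl⟩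
        exact ⟨a + b, ⟨a, ha, b, hb, rfl⟩, psi_add x a b⟩
      · rintro ⟨c', ⟨a, ha, b, hb, rfl⟩, rfl⟩
        exact ⟨psi x a, ⟨a, ha, rfl⟩, psi0 x b, ⟨b, hb, rfl⟩, (psi_add x a b).symm⟩
    rw [himg, hAB, psi_image_box]
  · -- card of A image
    rw [Finset.card_image_of_injOn (fun v hv w hw h =>
      psi_injOn x v w ((mem_box_iff x v).mp (hA_sub hv)) ((mem_box_iff x w).mp (hA_sub hw)) h)]
    exact hcard
  · -- counting
    have hCcard : C.card = ∏ i, x i := by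
      rw [hC, Fintype.card_piFinset]
      refine Finset.prod_congr rfl fun i _ => ?_
      rw [Int.card_Icc]
      have := hx i; omega
    have hIcc : (Finset.Icc 1 ((∏ i, x i : ℕ) : ℤ)).card = ∏ i, x i := by
      rw [Int.card_Icc]; omega
    have hAimg : (A.image (psi x)).card = A.card :=
      Finset.card_image_of_injOn (fun v hv w hw h =>
        psi_injOn x v w ((mem_box_iff x v).mp (hA_sub hv)) ((mem_box_iff x w).mp (hA_sub hw)) h)
    have hBimg : (B.image (psi0 x)).card = B.card :=
      Finset.card_image_of_injOn (fun v hv w hw h =>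
        psi0_inj x v w (hB_sub v hv) (hB_sub w hw) h)
    rw [hIcc, hAimg, hBimg, ← hCcard]
    exact hmul
  · exact Finset.mem_image.mpr ⟨0, h0B, psi0_zero x⟩
  · rintro b' hb'
    obtain ⟨b, hb, rfl⟩ := Finset.mem_image.mp hb'
    exact psi0_nonneg x b (hB_sub b hb)

theorem contiguous_max_tilings_le_interval (d : ℕ) (hd : 1 ≤ d) (x : Fin d → ℕ)
    (hx : ∀ i, 0 < x i) :
    ∀ α : ℕ, ∃ α' : ℕ,
      Nat.card (CanTd d x α) ≤ Nat.card (CanT1 α' (∏ i, x i)) := by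
  intro α
  refine ⟨α, ?_⟩
  have hn0 : 0 < ∏ i, x i := Finset.prod_pos (fun i _ => hx i)
  set n := ∏ i, x i with hn
  -- the target is finite
  have hsub : CanT1 α n ⊆
      ↑((Finset.Icc (1:ℤ) (n:ℤ)).powerset ×ˢ (Finset.Icc (0:ℤ) (n:ℤ)).powerset) := by
    rintro ⟨A, B⟩ ⟨h1, h2, h3, h4, h5⟩
    simp only [Finset.coe_product, Set.mem_prod, Finset.mem_coe, Finset.mem_powerset]
    have hA : A ⊆ Finset.Icc (1:ℤ) (n:ℤ) := by
      intro a ha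
      have : a + 0 ∈ A + B := Finset.add_mem_add ha h4
      rw [h1] at this; simpa using this
    have hA_ne : A.Nonempty := by
      have h1' : (1:ℤ) ∈ Finset.Icc (1:ℤ) (n:ℤ) := by simp; omega
      rw [← h1] at h1'
      obtain ⟨a, ha, -⟩ := Finset.mem_add.mp h1'
      exact ⟨a, ha⟩
    refine ⟨hA, ?_⟩
    intro b hb
    obtain ⟨a, ha⟩ := hA_ne
    have hab : a + b ∈ Finset.Icc (1:ℤ) (n:ℤ) := by
      rw [← h1]; exact Finset.add_mem_add ha hb
    have h6 := h5 b hb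
    have h7 := Finset.mem_Icc.mp (hA ha)
    have h8 := Finset.mem_Icc.mp hab
    rw [Finset.mem_Icc]
    omega
  have hfin : (CanT1 α n).Finite := Set.Finite.subset (Finset.finite_toSet _) hsub
  haveI := hfin.to_subtype
  -- the injection
  set F : ↥(CanTd d x α) → ↥(CanT1 α n) :=
    fun q => ⟨(q.1.1.image (psi x), q.1.2.image (psi0 x)),
      canTd_map_mem d x hx α q.1 q.2⟩ with hF
  have hFinj : Function.Injective F := by
    rintro ⟨⟨A₁, B₁⟩, hp⟩ ⟨⟨A₂, B₂⟩, hq⟩ h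
    simp only [hF, Subtype.mk.injEq, Prod.mk.injEq] at h
    obtain ⟨hA, hB⟩ := h
    obtain ⟨hAB₁, -, -, h0B₁, hBpos₁⟩ := hp
    obtain ⟨hAB₂, -, -, h0B₂, hBpos₂⟩ := hq
    set C := Fintype.piFinset (fun i => Finset.Icc 1 (x i : ℤ))
    have sub : ∀ (A B : Finset (Fin d → ℤ)), A + B = C → (0 : Fin d → ℤ) ∈ B →
        A ⊆ C := by
      intro A B hAB h0B a ha
      have : a + 0 ∈ A + B := Finset.add_mem_add ha h0B
      rw [hAB] at this; simpa using this
    have ne : ∀ (A B : Finset (Fin d → ℤ)), A + B = C → A.Nonempty := by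
      intro A B hAB
      have h1 : (1 : Fin d → ℤ) ∈ C := by
        rw [mem_box_iff]; intro i; have := hx i
        constructor <;> simp <;> omega
      rw [← hAB] at h1
      obtain ⟨a, ha, -⟩ := Finset.mem_add.mp h1
      exact ⟨a, ha⟩
    have bsub : ∀ (A B : Finset (Fin d → ℤ)), A + B = C → (0 : Fin d → ℤ) ∈ B →
        (∀ b ∈ B, ∀ i, 0 ≤ b i) → ∀ b ∈ B, ∀ i, 0 ≤ b i ∧ b i < x i := by
      intro A B hAB h0B hBpos b hb i
      obtain ⟨a, ha⟩ := ne A B hAB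
      have hab : a + b ∈ C := by rw [← hAB]; exact Finset.add_mem_add ha hb
      rw [mem_box_iff] at hab
      have h1 := (mem_box_iff x a).mp (sub A B hAB h0B ha) i
      have h2 := hab i
      have h3 := hBpos b hb i
      simp only [Pi.add_apply] at h2
      omega
    have hA12 : A₁ = A₂ := by
      ext a
      constructor
      · intro ha
        have : psi x a ∈ A₂.image (psi x) := hA ▸ Finset.mem_image_of_mem _ ha
        obtain ⟨a', ha', heq⟩ := Finset.mem_image.mp this
        rwa [psi_injOn x a' a ((mem_box_iff x a').mp (sub A₂ B₂ hAB₂ h0B₂ ha'))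
          ((mem_box_iff x a).mp (sub A₁ B₁ hAB₁ h0B₁ ha)) heq] at ha'
      · intro ha
        have : psi x a ∈ A₁.image (psi x) := hA ▸ Finset.mem_image_of_mem _ ha
        obtain ⟨a', ha', heq⟩ := Finset.mem_image.mp this
        rwa [psi_injOn x a' a ((mem_box_iff x a').mp (sub A₁ B₁ hAB₁ h0B₁ ha'))
          ((mem_box_iff x a).mp (sub A₂ B₂ hAB₂ h0B₂ ha)) heq] at ha'
    have hB12 : B₁ = B₂ := by
      ext b
      constructor
      · intro hb
        have : psi0 x b ∈ B₂.image (psi0 x) := hB ▸ Finset.mem_image_of_mem _ hb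
        obtain ⟨b', hb', heq⟩ := Finset.mem_image.mp this
        rwa [psi0_inj x b' b (bsub A₂ B₂ hAB₂ h0B₂ hBpos₂ b' hb')
          (bsub A₁ B₁ hAB₁ h0B₁ hBpos₁ b hb) heq] at hb'
      · intro hb
        have : psi0 x b ∈ B₁.image (psi0 x) := hB ▸ Finset.mem_image_of_mem _ hb
        obtain ⟨b', hb', heq⟩ := Finset.mem_image.mp this
        rwa [psi0_inj x b' b (bsub A₁ B₁ hAB₁ h0B₁ hBpos₁ b' hb')
          (bsub A₂ B₂ hAB₂ h0B₂ hBpos₂ b hb) heq] at hb'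
    simp [hA12, hB12]
  exact Nat.card_le_card_of_injective F hFinj
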